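/- The minimum number of monotone single-element block moves needed to sort a permutation π of n elements to the identity equals n − lis(π), where lis(π) is the length of the longest increasing subsequence of π. -/

import Mathlib

/-- The identity permutation of `{1,…,n}` as a list `[1, 2, …, n]`. -/
def idL (n : ℕ) : List ℕ := (List.range n).map (· + 1)

/-- `l` is a permutation of `{1,…,n}` (written as a list). -/
def IsPermList (n : ℕ) (l : List ℕ) : Prop := l.Perm (idL n)

/-- The extension of `π` by `π₀ = 0` and `π_{n+1} = n+1`. -/
def ext (n : ℕ) (l : List ℕ) : List ℕ := 0 :: (l ++ [n + 1])

/-- Number of adjacent pairs of the extended permutation satisfying `p`. -/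
def adjCount (p : ℕ → ℕ → Bool) (n : ℕ) (l : List ℕ) : ℕ :=
  ((ext n l).zip (ext n l).tail).countP (fun q => p q.1 q.2)

/-- Number of breakpoints: adjacent pairs with `π_{i+1} ≠ π_i + 1`. -/
def bp (n : ℕ) (l : List ℕ) : ℕ := adjCount (fun a b => b ≠ a + 1) n l

/-- Number of descents: adjacent pairs with `π_i > π_{i+1}`. -/
def des (n : ℕ) (l : List ℕ) : ℕ := adjCount (fun a b => b < a) n l

/-- Number of gaps: adjacent pairs with `π_{i+1} > π_i + 1`. -/
def gap (n : ℕ) (l : List ℕ) : ℕ := adjCount (fun a b => a + 1 < b) n l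

/-- Number of inverse descents: pairs of positions `i < j` with `π_i = π_j + 1`. -/
def invDes (l : List ℕ) : ℕ :=
  (Finset.univ.filter (fun p : Fin l.length × Fin l.length =>
    (p.1 : ℕ) < (p.2 : ℕ) ∧ l.get p.1 = l.get p.2 + 1)).card

/-- Number of inverse gaps: pairs of positions with `i > j + 1` and `π_i = π_j + 1`. -/
def invGap (l : List ℕ) : ℕ :=
  (Finset.univ.filter (fun p : Fin l.length × Fin l.length =>
    (p.2 : ℕ) + 1 < (p.1 : ℕ) ∧ l.get p.1 = l.get p.2 + 1)).card

/-- `l'` is obtained from `l` by a block move: exchanging two nonempty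
consecutive blocks `B` and `C`. -/
def IsBlockMove (l l' : List ℕ) : Prop :=
  ∃ A B C D : List ℕ, B ≠ [] ∧ C ≠ [] ∧ l = A ++ B ++ C ++ D ∧ l' = A ++ C ++ B ++ D

/-- A monotone block move: every element of the first (left) exchanged block
exceeds every element of the second (right) exchanged block. -/
def IsMonotoneBlockMove (l l' : List ℕ) : Prop :=
  ∃ A B C D : List ℕ, B ≠ [] ∧ C ≠ [] ∧ (∀ x ∈ B, ∀ y ∈ C, y < x) ∧
    l = A ++ B ++ C ++ D ∧ l' = A ++ C ++ B ++ D

/-- A single-element block move: one of the two exchanged blocks has size one. -/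
def IsSingleBlockMove (l l' : List ℕ) : Prop :=
  ∃ A B C D : List ℕ, B ≠ [] ∧ C ≠ [] ∧ (B.length = 1 ∨ C.length = 1) ∧
    l = A ++ B ++ C ++ D ∧ l' = A ++ C ++ B ++ D

/-- A monotone single-element block move. -/
def IsMonoSingleBlockMove (l l' : List ℕ) : Prop :=
  ∃ A B C D : List ℕ, B ≠ [] ∧ C ≠ [] ∧ (B.length = 1 ∨ C.length = 1) ∧
    (∀ x ∈ B, ∀ y ∈ C, y < x) ∧ l = A ++ B ++ C ++ D ∧ l' = A ++ C ++ B ++ D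

/-- `l` can be transformed into `target` by `t` moves of type `R`. -/
def SortsIn (R : List ℕ → List ℕ → Prop) (l target : List ℕ) (t : ℕ) : Prop :=
  ∃ c : ℕ → List ℕ, c 0 = l ∧ c t = target ∧ ∀ i < t, R (c i) (c (i + 1))

/-- Length of the longest increasing subsequence of `l`. -/
def lis (l : List ℕ) : ℕ :=
  ((l.sublists.filter (fun s => decide (List.IsChain (· < ·) s))).map List.length).foldr max 0

section LisAPI

lemma le_lis {s l : List ℕ} (hs : s.Sublist l) (hc : List.IsChain (· < ·) s) :
    s.length ≤ lis l := by
  unfold lis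
  have hmem : s.length ∈ ((l.sublists.filter
      (fun s => decide (List.IsChain (· < ·) s))).map List.length) := by
    refine List.mem_map.2 ⟨s, ?_, rfl⟩
    refine List.mem_filter.2 ⟨List.mem_sublists.2 hs, by simpa using hc⟩
  generalize ((l.sublists.filter (fun s => decide (List.IsChain (· < ·) s))).map List.length) = L at hmem ⊢
  induction L with
  | nil => simp at hmem
  | cons a L ih =>
    simp only [List.foldr_cons]
    rcases List.mem_cons.1 hmem with h | h
    · omega
    · exact le_trans (ih h) (le_max_right _ _)

lemma lis_spec (l : List ℕ) :
    ∃ s, s.Sublist l ∧ List.IsChain (· < ·) s ∧ s.length = lis l := by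
  unfold lis
  have hne : ∀ x ∈ ((l.sublists.filter
      (fun s => decide (List.IsChain (· < ·) s))).map List.length), ∃ s, s.Sublist l ∧ List.IsChain (· < ·) s ∧ s.length = x := by
    intro x hx
    rcases List.mem_map.1 hx with ⟨s, hs, rfl⟩
    rcases List.mem_filter.1 hs with ⟨h1, h2⟩
    exact ⟨s, List.mem_sublists.1 h1, by simpa using h2, rfl⟩
  generalize ((l.sublists.filter (fun s => decide (List.IsChain (· < ·) s))).map List.length) = L at hne ⊢
  induction L with
  | nil => exact ⟨[], List.nil_sublist l, List.isChain_nil, rfl⟩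
  | cons a L ih =>
    simp only [List.foldr_cons]
    rcases ih (fun x hx => hne x (List.mem_cons_of_mem _ hx)) with ⟨s, h1, h2, h3⟩
    rcases le_total a (List.foldr max 0 L) with h | h
    · exact ⟨s, h1, h2, by rw [h3]; omega⟩
    · rcases hne a (List.mem_cons_self) with ⟨s', h1', h2', h3'⟩
      exact ⟨s', h1', h2', by rw [h3']; omega⟩

lemma lis_le_length (l : List ℕ) : lis l ≤ l.length := by
  obtain ⟨s, hs, _, hlen⟩ := lis_spec l
  rw [← hlen]; exact hs.length_le

lemma lis_mono {s l : List ℕ} (h : s.Sublist l) : lis s ≤ lis l := by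
  obtain ⟨w, hw, hc, hlen⟩ := lis_spec s
  rw [← hlen]; exact le_lis (hw.trans h) hc

lemma chain'_idL (n : ℕ) : List.IsChain (· < ·) (idL n) := by
  unfold idL
  refine List.Pairwise.isChain ?_
  refine List.pairwise_map.2 ?_
  have := List.pairwise_lt_range (n := n)
  exact this.imp (by omega)

lemma length_idL (n : ℕ) : (idL n).length = n := by simp [idL]

lemma nodup_idL (n : ℕ) : (idL n).Nodup := by
  have := (chain'_idL n)
  rw [List.isChain_iff_pairwise] at this
  exact this.imp (fun h => Nat.ne_of_lt h)

lemma mem_idL {n x : ℕ} : x ∈ idL n ↔ 1 ≤ x ∧ x ≤ n := by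
  simp only [idL, List.mem_map, List.mem_range]
  constructor
  · rintro ⟨a, ha, rfl⟩; omega
  · intro h; exact ⟨x - 1, by omega, by omega⟩

lemma lis_idL (n : ℕ) : lis (idL n) = n := by
  have h1 := le_lis (List.Sublist.refl (idL n)) (chain'_idL n)
  have h2 := lis_le_length (idL n)
  rw [length_idL] at h1 h2
  omega

lemma length_of_perm {n : ℕ} {l : List ℕ} (hl : IsPermList n l) : l.length = n := by
  have := hl.length_eq; rwa [length_idL] at this

lemma nodup_of_perm {n : ℕ} {l : List ℕ} (hl : IsPermList n l) : l.Nodup := by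
  exact hl.symm.nodup (nodup_idL n)

lemma eq_idL_of_lis_eq {n : ℕ} {l : List ℕ} (hl : IsPermList n l) (h : lis l = n) :
    l = idL n := by
  obtain ⟨s, hs, hc, hlen⟩ := lis_spec l
  have hslen : s.length = l.length := by rw [hlen, h, length_of_perm hl]
  have : s = l := hs.eq_of_length hslen
  subst this
  haveI : IsAntisymm ℕ (· ≤ ·) := ⟨fun _ _ => le_antisymm⟩
  refine List.Perm.eq_of_sortedLE ?_ ?_ hl
  · exact List.sortedLE_iff_pairwise.2 (List.isChain_iff_pairwise.1 (hc.imp (fun _ _ h => le_of_lt h)))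
  · exact List.sortedLE_iff_pairwise.2 (List.isChain_iff_pairwise.1 ((chain'_idL n).imp (fun _ _ h => le_of_lt h)))

end LisAPI

section LowerBound

lemma lis_move_le {l l' : List ℕ} (h : IsSingleBlockMove l l') : lis l' ≤ lis l + 1 := by
  obtain ⟨A, B, C, D, hB, hC, hlen, hl, hl'⟩ := h
  obtain ⟨s, hs, hc, hlenS⟩ := lis_spec l'
  rw [← hlenS]
  rcases hlen with h1 | h1
  · -- B = [b]
    obtain ⟨b, rfl⟩ := List.length_eq_one_iff.1 h1
    rw [hl'] at hs
    have hs2 : s.Sublist (A ++ C ++ ([b] ++ D)) := by simpa using hs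
    rw [List.sublist_append_iff] at hs2
    obtain ⟨s1, s2, rfl, hs1, hs2⟩ := hs2
    have hACD : (A ++ C ++ D).Sublist l := by
      rw [hl]
      exact ((List.sublist_append_left A [b]).append (List.Sublist.refl C)).append
        (List.Sublist.refl D)
    rcases (List.sublist_cons_iff).1 hs2 with h2 | ⟨t, rfl, h2⟩
    · have : (s1 ++ s2).Sublist (A ++ C ++ D) := (hs1.append h2)
      calc (s1 ++ s2).length ≤ lis (A ++ C ++ D) := le_lis this hc
        _ ≤ lis l + 1 := by have := lis_mono hACD; omega
    · have hsub : (s1 ++ t).Sublist (A ++ C ++ D) := hs1.append h2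
      have hchain : List.IsChain (· < ·) (s1 ++ t) := by
        refine List.IsChain.sublist hc ?_
        refine List.Sublist.append (List.Sublist.refl s1) ?_
        simp
      have := le_lis hsub hchain
      have h3 := lis_mono hACD
      simp only [List.length_append, List.length_cons] at *
      omega
  · -- C = [c]
    obtain ⟨c, rfl⟩ := List.length_eq_one_iff.1 h1
    rw [hl'] at hs
    have hs2 : s.Sublist (A ++ ([c] ++ (B ++ D))) := by
      rw [show A ++ [c] ++ B ++ D = A ++ ([c] ++ (B ++ D)) by simp] at hs; exact hs
    rw [List.sublist_append_iff] at hs2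
    obtain ⟨s1, s2, rfl, hs1, hs2⟩ := hs2
    have hABD : (A ++ B ++ D).Sublist l := by
      rw [hl]
      exact (List.sublist_append_left (A ++ B) [c]).append (List.Sublist.refl D)
    rcases (List.sublist_cons_iff).1 hs2 with h2 | ⟨t, rfl, h2⟩
    · have : (s1 ++ s2).Sublist (A ++ B ++ D) := by
        have := hs1.append h2
        simpa [List.append_assoc] using this
      calc (s1 ++ s2).length ≤ lis (A ++ B ++ D) := le_lis this hc
        _ ≤ lis l + 1 := by have := lis_mono hABD; omega
    · have hsub : (s1 ++ t).Sublist (A ++ B ++ D) := by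
        have := hs1.append h2
        simpa [List.append_assoc] using this
      have hchain : List.IsChain (· < ·) (s1 ++ t) := by
        refine List.IsChain.sublist hc ?_
        refine List.Sublist.append (List.Sublist.refl s1) ?_
        simp
      have := le_lis hsub hchain
      have h3 := lis_mono hABD
      simp only [List.length_append, List.length_cons] at *
      omega

end LowerBound

section SplitLemmas

/-- Elements in the prefix of a split have smaller index, suffix larger. -/
lemma idx_lt_of_split {l u w : List ℕ} {c : ℕ} (hnd : l.Nodup) (h : l = u ++ c :: w) :
    (∀ x ∈ u, l.idxOf x < l.idxOf c) ∧ (∀ x ∈ w, l.idxOf c < l.idxOf x) := by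
  subst h
  rw [List.nodup_append] at hnd
  obtain ⟨hu, hcw, hdisj⟩ := hnd
  have hcnu : c ∉ u := fun hc => hdisj c hc c List.mem_cons_self rfl
  have hidxc : (u ++ c :: w).idxOf c = u.length := by
    rw [List.idxOf_append_of_notMem hcnu, List.idxOf_cons_self]; omega
  constructor
  · intro x hx
    rw [hidxc, List.idxOf_append_of_mem hx]
    exact List.idxOf_lt_length_iff.2 hx
  · intro x hx
    rw [hidxc]
    have hxnu : x ∉ u := fun hxu => hdisj x hxu x (List.mem_cons_of_mem c hx) rfl
    have hxc : x ≠ c := fun h => (List.nodup_cons.1 hcw).1 (h ▸ hx)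
    rw [List.idxOf_append_of_notMem hxnu, List.idxOf_cons_ne _ (fun h => hxc h.symm)]
    omega

/-- Splitting a list at two elements with ordered indices. -/
lemma double_split {l : List ℕ} {b v : ℕ} (hnd : l.Nodup) (hb : b ∈ l) (hv : v ∈ l)
    (hlt : l.idxOf b < l.idxOf v) :
    ∃ A M D, l = A ++ b :: M ++ v :: D := by
  obtain ⟨A, R, hAR⟩ := List.append_of_mem hb
  have hvR : v ∈ R := by
    have hvl := hv
    rw [hAR] at hvl
    rcases List.mem_append.1 hvl with h | h
    · exact absurd ((idx_lt_of_split hnd hAR).1 v h) (by omega)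
    · rcases List.mem_cons.1 h with rfl | h
      · omega
      · exact h
  obtain ⟨M, D, hMD⟩ := List.append_of_mem hvR
  exact ⟨A, M, D, by rw [hAR, hMD]; simp⟩

/-- Removing an absent element from the middle of a sublist target. -/
lemma sublist_remove {s u w : List ℕ} {a : ℕ} (h : s.Sublist (u ++ a :: w)) (ha : a ∉ s) :
    s.Sublist (u ++ w) := by
  rw [List.sublist_append_iff] at h
  obtain ⟨s1, s2, rfl, h1, h2⟩ := h
  rcases List.sublist_cons_iff.1 h2 with h2 | ⟨t, rfl, h2⟩
  · exact h1.append h2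
  · exact absurd (List.mem_append.2 (Or.inr (List.mem_cons_self))) ha

/-- If a sublist avoids the right part, it is a sublist of the left part. -/
lemma sublist_left_of_avoid {s u w : List ℕ} (h : s.Sublist (u ++ w))
    (hav : ∀ x ∈ s, x ∉ w) : s.Sublist u := by
  rw [List.sublist_append_iff] at h
  obtain ⟨s1, s2, rfl, h1, h2⟩ := h
  cases s2 with
  | nil => simpa using h1
  | cons a t =>
    exact absurd (h2.subset (List.mem_cons_self))
      (hav a (List.mem_append.2 (Or.inr (List.mem_cons_self))))

/-- If a sublist avoids the left part, it is a sublist of the right part. -/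
lemma sublist_right_of_avoid {s u w : List ℕ} (h : s.Sublist (u ++ w))
    (hav : ∀ x ∈ s, x ∉ u) : s.Sublist w := by
  rw [List.sublist_append_iff] at h
  obtain ⟨s1, s2, rfl, h1, h2⟩ := h
  cases s1 with
  | nil => simpa using h2
  | cons a t =>
    exact absurd (h1.subset (List.mem_cons_self)) (hav a (List.mem_cons_self))

/-- Splitting a sublist relation at a common element. -/
lemma sublist_split {s t u w : List ℕ} {b : ℕ} (hbs : b ∉ s) (hbu : b ∉ u) (hbw : b ∉ w)
    (h : (s ++ b :: t).Sublist (u ++ b :: w)) : s.Sublist u ∧ t.Sublist w := by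
  rw [List.sublist_append_iff] at h
  obtain ⟨s1, s2, he, h1, h2⟩ := h
  rcases List.sublist_cons_iff.1 h2 with h2' | ⟨t', ht', h2'⟩
  · exfalso
    have hbm : b ∈ s1 ++ s2 := by
      rw [← he]; exact List.mem_append.2 (Or.inr (List.mem_cons_self))
    rcases List.mem_append.1 hbm with h | h
    · exact hbu (h1.subset h)
    · exact hbw (h2'.subset h)
  · subst ht'
    have hbs1 : b ∉ s1 := fun h => hbu (h1.subset h)
    have hlen : s.length = s1.length := by
      have e1 : (s ++ b :: t).idxOf b = s.length := by
        rw [List.idxOf_append_of_notMem hbs, List.idxOf_cons_self]; omega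
      have e2 : (s1 ++ b :: t').idxOf b = s1.length := by
        rw [List.idxOf_append_of_notMem hbs1, List.idxOf_cons_self]; omega
      rw [he] at e1; omega
    obtain ⟨rfl, he2⟩ := List.append_inj he hlen
    have : t = t' := by simpa using he2
    subst this
    exact ⟨h1, h2'⟩

/-- A nodup list is pairwise increasing in `indexOf`. -/
lemma pairwise_indexOf {l : List ℕ} (hnd : l.Nodup) :
    l.Pairwise (fun a b => l.idxOf a < l.idxOf b) := by
  rw [List.pairwise_iff_get]
  intro i j hij
  rw [List.get_idxOf hnd, List.get_idxOf hnd]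
  exact hij

/-- Threshold split of a sorted list. -/
lemma sorted_threshold {S : List ℕ} {v : ℕ} (hS : S.Pairwise (· < ·)) (hv : v ∉ S) :
    ∃ S₁ S₂, S = S₁ ++ S₂ ∧ (∀ x ∈ S₁, x < v) ∧ (∀ x ∈ S₂, v < x) := by
  induction S with
  | nil => exact ⟨[], [], rfl, by simp, by simp⟩
  | cons a S ih =>
    rcases ih (List.Pairwise.of_cons hS) (fun h => hv (List.mem_cons_of_mem a h)) with
      ⟨S₁, S₂, he, h1, h2⟩
    rcases lt_trichotomy a v with h | h | h
    · refine ⟨a :: S₁, S₂, by rw [he, List.cons_append], ?_, h2⟩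
      intro x hx
      rcases List.mem_cons.1 hx with rfl | hx'
      · exact h
      · exact h1 x hx'
    · exact absurd (h ▸ List.mem_cons_self) hv
    · refine ⟨[], a :: S, by simp, by simp, ?_⟩
      intro x hx
      rcases List.mem_cons.1 hx with rfl | hx'
      · exact h
      · exact lt_trans h (List.rel_of_pairwise_cons hS hx')

end SplitLemmas

section Key

/-- On a nodup list, elements of an increasing sublist have increasing indices. -/
lemma S_idx_mono {l S : List ℕ} (hnd : l.Nodup) (hS : S.Sublist l)
    (hc : List.IsChain (· < ·) S) :
    ∀ u ∈ S, ∀ u' ∈ S, u < u' → l.idxOf u < l.idxOf u' := by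
  have Pidx : S.Pairwise (fun a b => l.idxOf a < l.idxOf b) :=
    List.Pairwise.sublist hS (pairwise_indexOf hnd)
  have Pval : S.Pairwise (· < ·) := List.isChain_iff_pairwise.1 hc
  intro u hu u' hu' huu
  obtain ⟨i, hi⟩ := List.mem_iff_get.1 hu
  obtain ⟨j, hj⟩ := List.mem_iff_get.1 hu'
  rw [List.pairwise_iff_get] at Pidx Pval
  rcases lt_trichotomy i j with h | h | h
  · exact hi ▸ hj ▸ Pidx i j h
  · exfalso; rw [← hi, ← hj, h] at huu; omega
  · exfalso; have := Pval j i h; rw [hi, hj] at this; omega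

/-- Dichotomy: a non-member of a maximum increasing sublist is blocked on one side. -/
lemma not_insertable {l S : List ℕ} (hnd : l.Nodup) (hS : S.Sublist l)
    (hc : List.IsChain (· < ·) S) (hmax : S.length = lis l) {v : ℕ} (hv : v ∈ l) (hvS : v ∉ S) :
    (∃ u ∈ S, v < u ∧ l.idxOf u < l.idxOf v) ∨
    (∃ u ∈ S, u < v ∧ l.idxOf v < l.idxOf u) := by
  by_contra hcon
  push_neg at hcon
  obtain ⟨h1, h2⟩ := hcon
  obtain ⟨P, Q, hPQ⟩ := List.append_of_mem hv
  have Pval : S.Pairwise (· < ·) := List.isChain_iff_pairwise.1 hc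
  obtain ⟨S₁, S₂, hSe, hS1, hS2⟩ := sorted_threshold Pval hvS
  have hidx := idx_lt_of_split hnd hPQ
  have hS1P : S₁.Sublist P := by
    have h0 : S₁.Sublist l := (List.sublist_append_left S₁ S₂).trans (hSe ▸ hS)
    rw [hPQ] at h0
    have h0' : S₁.Sublist (P ++ Q) :=
      sublist_remove h0 (fun hmem => by have := hS1 v hmem; omega)
    refine sublist_left_of_avoid h0' ?_
    intro x hx hxQ
    have hxS : x ∈ S := hSe ▸ List.mem_append.2 (Or.inl hx)
    have := h1 x hxS
    have := h2 x hxS (hS1 x hx)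
    have := hidx.2 x hxQ
    omega
  have hS2Q : S₂.Sublist Q := by
    have h0 : S₂.Sublist l := (List.sublist_append_right S₁ S₂).trans (hSe ▸ hS)
    rw [hPQ] at h0
    have h0' : S₂.Sublist (v :: Q) := by
      refine sublist_right_of_avoid h0 ?_
      intro x hx hxP
      have hxS : x ∈ S := hSe ▸ List.mem_append.2 (Or.inr hx)
      have := h1 x hxS (hS2 x hx)
      have := hidx.1 x hxP
      omega
    have : S₂.Sublist ([] ++ v :: Q) := by simpa using h0'
    simpa using sublist_remove this (fun hmem => by have := hS2 v hmem; omega)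
  have hS'sub : (S₁ ++ v :: S₂).Sublist l := by
    rw [hPQ]
    exact hS1P.append (List.cons_sublist_cons.2 hS2Q)
  have hS'chain : List.IsChain (· < ·) (S₁ ++ v :: S₂) := by
    refine List.Pairwise.isChain ?_
    rw [List.pairwise_append]
    refine ⟨List.Pairwise.sublist (List.sublist_append_left S₁ S₂) (hSe ▸ Pval), ?_, ?_⟩
    · rw [List.pairwise_cons]
      exact ⟨hS2, List.Pairwise.sublist (List.sublist_append_right S₁ S₂) (hSe ▸ Pval)⟩
    · intro x hx y hy
      rcases List.mem_cons.1 hy with rfl | hy'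
      · exact hS1 x hx
      · exact lt_trans (hS1 x hx) (hS2 y hy')
  have := le_lis hS'sub hS'chain
  have hlen : (S₁ ++ v :: S₂).length = S.length + 1 := by simp [hSe]; omega
  omega

lemma exists_min_above {S : List ℕ} {v : ℕ} (h : ∃ u, u ∈ S ∧ v < u) :
    ∃ b, b ∈ S ∧ v < b ∧ ∀ u ∈ S, v < u → b ≤ u := by
  classical
  obtain ⟨hb1, hb2⟩ := Nat.find_spec h
  refine ⟨Nat.find h, hb1, hb2, ?_⟩
  intro u hu hvu
  by_contra hlt
  exact Nat.find_min h (by omega) ⟨hu, hvu⟩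

lemma exists_max_below {S : List ℕ} {v : ℕ} (h : ∃ u, u ∈ S ∧ u < v) :
    ∃ a, a ∈ S ∧ a < v ∧ ∀ u ∈ S, u < v → u ≤ a := by
  classical
  obtain ⟨m, hm⟩ := h
  have hspec := Nat.findGreatest_spec (P := fun u => u ∈ S ∧ u < v) (le_of_lt hm.2) hm
  exact ⟨_, hspec.1, hspec.2, fun u hu huv => Nat.le_findGreatest (le_of_lt huv) ⟨hu, huv⟩⟩

/-- Existence of an unobstructed right-case element, by descent on values. -/
lemma exists_goodR {l S : List ℕ} (hnd : l.Nodup) (hS : S.Sublist l)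
    (hc : List.IsChain (· < ·) S) :
    ∀ v, v ∈ l → v ∉ S → (∃ u ∈ S, v < u ∧ l.idxOf u < l.idxOf v) →
    ∃ v' b, v' ∈ l ∧ v' ∉ S ∧ b ∈ S ∧ v' < b ∧ l.idxOf b < l.idxOf v' ∧
      (∀ u ∈ S, v' < u → b ≤ u) ∧
      (∀ w ∈ l, l.idxOf b < l.idxOf w → l.idxOf w < l.idxOf v' → v' < w) := by
  intro v
  induction v using Nat.strong_induction_on with
  | _ v ih =>
    rintro hv hvS ⟨u0, hu0S, hu0v, hu0i⟩
    obtain ⟨b, hbS, hvb, hbmin⟩ := exists_min_above ⟨u0, hu0S, hu0v⟩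
    have hbi : l.idxOf b < l.idxOf v := by
      rcases eq_or_lt_of_le (hbmin u0 hu0S hu0v) with he | hlt
      · rwa [he]
      · exact lt_trans (S_idx_mono hnd hS hc b hbS u0 hu0S hlt) hu0i
    by_cases hgood : ∀ w ∈ l, l.idxOf b < l.idxOf w → l.idxOf w < l.idxOf v → v < w
    · exact ⟨v, b, hv, hvS, hbS, hvb, hbi, hbmin, hgood⟩
    · push_neg at hgood
      obtain ⟨w, hw, hbw, hwv, hwle⟩ := hgood
      have hwv' : w < v := by
        rcases lt_or_eq_of_le hwle with h | h
        · exact h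
        · exfalso; subst h; omega
      have hwS : w ∉ S := by
        intro hwS
        have := S_idx_mono hnd hS hc w hwS b hbS (lt_trans hwv' hvb)
        omega
      exact ih w hwv' hw hwS ⟨b, hbS, lt_trans hwv' hvb, hbw⟩

/-- Existence of an unobstructed left-case element, by ascent on values. -/
lemma exists_goodL {l S : List ℕ} (hnd : l.Nodup) (hS : S.Sublist l)
    (hc : List.IsChain (· < ·) S) {N : ℕ} (hbound : ∀ x ∈ l, x ≤ N) :
    ∀ k v, N ≤ v + k → v ∈ l → v ∉ S → (∃ u ∈ S, u < v ∧ l.idxOf v < l.idxOf u) →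
    ∃ v' a, v' ∈ l ∧ v' ∉ S ∧ a ∈ S ∧ a < v' ∧ l.idxOf v' < l.idxOf a ∧
      (∀ u ∈ S, u < v' → u ≤ a) ∧
      (∀ w ∈ l, l.idxOf v' < l.idxOf w → l.idxOf w < l.idxOf a → w < v') := by
  intro k
  induction k with
  | zero =>
    rintro v hNv hv hvS ⟨u0, hu0S, hu0v, hu0i⟩
    obtain ⟨a, haS, hav, hamax⟩ := exists_max_below ⟨u0, hu0S, hu0v⟩
    have hai : l.idxOf v < l.idxOf a := by
      rcases eq_or_lt_of_le (hamax u0 hu0S hu0v) with he | hlt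
      · rwa [← he]
      · exact lt_trans hu0i (S_idx_mono hnd hS hc u0 hu0S a haS hlt)
    refine ⟨v, a, hv, hvS, haS, hav, hai, hamax, ?_⟩
    intro w hw hvw hwa
    have hwN := hbound w hw
    have hwv : w ≠ v := by
      intro h; subst h; omega
    rcases lt_or_gt_of_ne hwv with h | h
    · exact h
    · omega
  | succ k ihk =>
    rintro v hNv hv hvS ⟨u0, hu0S, hu0v, hu0i⟩
    obtain ⟨a, haS, hav, hamax⟩ := exists_max_below ⟨u0, hu0S, hu0v⟩
    have hai : l.idxOf v < l.idxOf a := by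
      rcases eq_or_lt_of_le (hamax u0 hu0S hu0v) with he | hlt
      · rwa [← he]
      · exact lt_trans hu0i (S_idx_mono hnd hS hc u0 hu0S a haS hlt)
    by_cases hgood : ∀ w ∈ l, l.idxOf v < l.idxOf w → l.idxOf w < l.idxOf a → w < v
    · exact ⟨v, a, hv, hvS, haS, hav, hai, hamax, hgood⟩
    · push_neg at hgood
      obtain ⟨w, hw, hvw, hwa, hwge⟩ := hgood
      have hwv : v < w := by
        rcases lt_or_eq_of_le hwge with h | h
        · exact h
        · exfalso; subst h; omega
      have hwS : w ∉ S := by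
        intro hwS
        have := S_idx_mono hnd hS hc a haS w hwS (lt_trans hav hwv)
        omega
      exact ihk w (by omega) hw hwS ⟨a, haS, lt_trans hav hwv, hwa⟩

/-- A sorted list with `a` as maximum ends with `a`. -/
lemma sorted_max_last {T : List ℕ} {a : ℕ} (hpw : T.Pairwise (· < ·)) (ha : a ∈ T)
    (hmax : ∀ x ∈ T, x ≤ a) : ∃ T', T = T' ++ [a] := by
  induction T with
  | nil => simp at ha
  | cons c T ih =>
    rcases List.mem_cons.1 ha with rfl | ha'
    · cases T with
      | nil => exact ⟨[], rfl⟩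
      | cons d T' =>
        exfalso
        have h1 := List.rel_of_pairwise_cons hpw (List.mem_cons_self)
        have h2 := hmax d (List.mem_cons_of_mem _ (List.mem_cons_self))
        omega
    · obtain ⟨T', hT'⟩ := ih (List.Pairwise.of_cons hpw) ha'
        (fun x hx => hmax x (List.mem_cons_of_mem _ hx))
      exact ⟨c :: T', by rw [hT', List.cons_append]⟩

/-- A sorted list with `b` as minimum starts with `b`. -/
lemma sorted_min_head {T : List ℕ} {b : ℕ} (hpw : T.Pairwise (· < ·)) (hb : b ∈ T)
    (hmin : ∀ x ∈ T, b ≤ x) : ∃ T', T = b :: T' := by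
  cases T with
  | nil => simp at hb
  | cons c T =>
    rcases List.mem_cons.1 hb with rfl | hb'
    · exact ⟨T, rfl⟩
    · exfalso
      have h1 := List.rel_of_pairwise_cons hpw hb'
      have h2 := hmin c (List.mem_cons_self)
      omega

end Key

section Moves

/-- The right-case move: shift `v` left, just before `b`. -/
lemma moveR {l S : List ℕ} (hnd : l.Nodup) (hS : S.Sublist l) (hc : List.IsChain (· < ·) S)
    {v b : ℕ} (hv : v ∈ l) (hvS : v ∉ S) (hbS : b ∈ S) (hvb : v < b)
    (hbi : l.idxOf b < l.idxOf v) (hbmin : ∀ u ∈ S, v < u → b ≤ u)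
    (hgood : ∀ w ∈ l, l.idxOf b < l.idxOf w → l.idxOf w < l.idxOf v → v < w) :
    ∃ l', IsMonoSingleBlockMove l l' ∧ S.length + 1 ≤ lis l' := by
  obtain ⟨A, M, D, hsplit⟩ := double_split hnd (hS.subset hbS) hv hbi
  have hsplit2 : l = A ++ b :: (M ++ v :: D) := by rw [hsplit]; simp
  have hidx1 := idx_lt_of_split hnd hsplit
  have hidx2 := idx_lt_of_split hnd hsplit2
  have hmemM : ∀ x ∈ M, v < x := by
    intro x hx
    have hxl : x ∈ l := by rw [hsplit2]; simp [hx]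
    refine hgood x hxl ?_ ?_
    · exact hidx2.2 x (List.mem_append.2 (Or.inl hx))
    · exact hidx1.1 x (List.mem_append.2 (Or.inr (List.mem_cons_of_mem b hx)))
  have Pval : S.Pairwise (· < ·) := List.isChain_iff_pairwise.1 hc
  obtain ⟨S₁, S₂, hSe, hS1, hS2⟩ := sorted_threshold Pval hvS
  have hbS2 : b ∈ S₂ := by
    rcases List.mem_append.1 (hSe ▸ hbS) with h | h
    · exact absurd (hS1 b h) (by omega)
    · exact h
  have hPS2 : List.Pairwise (· < ·) S₂ :=
    List.Pairwise.sublist (List.sublist_append_right S₁ S₂) (hSe ▸ Pval)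
  obtain ⟨S₂', hS₂e⟩ := sorted_min_head hPS2 hbS2
    (fun x hx => hbmin x (hSe ▸ List.mem_append.2 (Or.inr hx)) (hS2 x hx))
  have hSe2 : S = S₁ ++ b :: S₂' := by rw [hSe, hS₂e]
  have hPS2' : List.Pairwise (· < ·) (b :: S₂') := hS₂e ▸ hPS2
  have hS2'gt : ∀ x ∈ S₂', b < x := fun x hx => List.rel_of_pairwise_cons hPS2' hx
  have hbnS₁ : b ∉ S₁ := fun h => by have := hS1 b h; omega
  have hbnA : b ∉ A := fun h => by have := hidx2.1 b h; omega
  have hbnMD : b ∉ M ++ v :: D := fun h => by have := hidx2.2 b h; omega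
  have hsub := sublist_split hbnS₁ hbnA hbnMD
    (by rw [← hSe2, ← hsplit2]; exact hS)
  obtain ⟨hS₁A, hS₂MD⟩ := hsub
  have hvnS₂' : v ∉ S₂' := fun h => by have := hS2'gt v h; omega
  have hS₂'MD : S₂'.Sublist (M ++ D) := sublist_remove hS₂MD hvnS₂'
  refine ⟨A ++ [v] ++ (b :: M) ++ D,
    ⟨A, b :: M, [v], D, by simp, by simp, Or.inr rfl, ?_, by rw [hsplit]; simp, rfl⟩, ?_⟩
  · intro x hx y hy
    rw [List.mem_singleton] at hy
    subst hy
    rcases List.mem_cons.1 hx with rfl | hx'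
    · exact hvb
    · exact hmemM x hx'
  · have h2 : (v :: b :: S₂').Sublist (v :: b :: (M ++ D)) :=
      List.cons_sublist_cons.2 (List.cons_sublist_cons.2 hS₂'MD)
    have hS'sub : (S₁ ++ v :: b :: S₂').Sublist (A ++ [v] ++ (b :: M) ++ D) := by
      have h3 := hS₁A.append h2
      have he : A ++ v :: b :: (M ++ D) = A ++ [v] ++ (b :: M) ++ D := by simp
      rwa [he] at h3
    have hchain : List.IsChain (· < ·) (S₁ ++ v :: b :: S₂') := by
      refine List.Pairwise.isChain ?_
      rw [List.pairwise_append]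
      refine ⟨List.Pairwise.sublist (List.sublist_append_left S₁ S₂) (hSe ▸ Pval), ?_, ?_⟩
      · rw [List.pairwise_cons]
        constructor
        · intro y hy
          rcases List.mem_cons.1 hy with rfl | hy'
          · exact hvb
          · exact lt_trans hvb (hS2'gt y hy')
        · exact hPS2'
      · intro x hx y hy
        have hxv := hS1 x hx
        rcases List.mem_cons.1 hy with rfl | hy'
        · exact hxv
        · rcases List.mem_cons.1 hy' with rfl | hy''
          · omega
          · have := hS2'gt y hy''; omega
    have hles := le_lis hS'sub hchain
    have hlen : (S₁ ++ v :: b :: S₂').length = S.length + 1 := by simp [hSe2]; omega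
    omega

/-- The left-case move: shift `v` right, just after `a`. -/
lemma moveL {l S : List ℕ} (hnd : l.Nodup) (hS : S.Sublist l) (hc : List.IsChain (· < ·) S)
    {v a : ℕ} (hv : v ∈ l) (hvS : v ∉ S) (haS : a ∈ S) (hav : a < v)
    (hai : l.idxOf v < l.idxOf a) (hamax : ∀ u ∈ S, u < v → u ≤ a)
    (hgood : ∀ w ∈ l, l.idxOf v < l.idxOf w → l.idxOf w < l.idxOf a → w < v) :
    ∃ l', IsMonoSingleBlockMove l l' ∧ S.length + 1 ≤ lis l' := by
  obtain ⟨A, M, D, hsplit⟩ := double_split hnd hv (hS.subset haS) hai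
  have hsplit2 : l = A ++ v :: (M ++ a :: D) := by rw [hsplit]; simp
  have hidx1 := idx_lt_of_split hnd hsplit
  have hidx2 := idx_lt_of_split hnd hsplit2
  have hmemM : ∀ x ∈ M, x < v := by
    intro x hx
    have hxl : x ∈ l := by rw [hsplit2]; simp [hx]
    refine hgood x hxl ?_ ?_
    · exact hidx2.2 x (List.mem_append.2 (Or.inl hx))
    · exact hidx1.1 x (List.mem_append.2 (Or.inr (List.mem_cons_of_mem v hx)))
  have Pval : S.Pairwise (· < ·) := List.isChain_iff_pairwise.1 hc
  obtain ⟨S₁, S₂, hSe, hS1, hS2⟩ := sorted_threshold Pval hvS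
  have haS1 : a ∈ S₁ := by
    rcases List.mem_append.1 (hSe ▸ haS) with h | h
    · exact h
    · exact absurd (hS2 a h) (by omega)
  have hPS1 : List.Pairwise (· < ·) S₁ :=
    List.Pairwise.sublist (List.sublist_append_left S₁ S₂) (hSe ▸ Pval)
  obtain ⟨S₁', hS₁e⟩ := sorted_max_last hPS1 haS1
    (fun x hx => hamax x (hSe ▸ List.mem_append.2 (Or.inl hx)) (hS1 x hx))
  have hS1'lt : ∀ x ∈ S₁', x < a := by
    intro x hx
    have hpw : List.Pairwise (· < ·) (S₁' ++ [a]) := hS₁e ▸ hPS1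
    rw [List.pairwise_append] at hpw
    exact hpw.2.2 x hx a (List.mem_singleton.2 rfl)
  have hSe2 : S = S₁' ++ a :: S₂ := by rw [hSe, hS₁e]; simp
  have hanS₁' : a ∉ S₁' := fun h => by have := hS1'lt a h; omega
  have hanAVM : a ∉ A ++ v :: M := fun h => by have := hidx1.1 a h; omega
  have hanD : a ∉ D := fun h => by have := hidx1.2 a h; omega
  have hsub := sublist_split hanS₁' hanAVM hanD
    (by rw [← hSe2, ← hsplit]; exact hS)
  obtain ⟨hS₁'AVM, hS₂D⟩ := hsub
  have hvnS₁' : v ∉ S₁' := fun h => by have := hS1'lt v h; omega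
  have hS₁'AM : S₁'.Sublist (A ++ M) := sublist_remove hS₁'AVM hvnS₁'
  refine ⟨A ++ (M ++ [a]) ++ [v] ++ D,
    ⟨A, [v], M ++ [a], D, by simp, by simp, Or.inl rfl, ?_, by rw [hsplit]; simp, rfl⟩, ?_⟩
  · intro x hx y hy
    rw [List.mem_singleton] at hx
    subst hx
    rcases List.mem_append.1 hy with hy' | hy'
    · exact hmemM y hy'
    · rw [List.mem_singleton] at hy'; omega
  · have h2 : (a :: v :: S₂).Sublist (a :: v :: D) :=
      List.cons_sublist_cons.2 (List.cons_sublist_cons.2 hS₂D)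
    have hS'sub : (S₁' ++ a :: v :: S₂).Sublist (A ++ (M ++ [a]) ++ [v] ++ D) := by
      have h3 := hS₁'AM.append h2
      have he : (A ++ M) ++ a :: v :: D = A ++ (M ++ [a]) ++ [v] ++ D := by simp
      rwa [he] at h3
    have hchain : List.IsChain (· < ·) (S₁' ++ a :: v :: S₂) := by
      refine List.Pairwise.isChain ?_
      rw [List.pairwise_append]
      refine ⟨List.Pairwise.sublist (by rw [hS₁e]; exact List.sublist_append_left S₁' [a]) hPS1, ?_, ?_⟩
      · rw [List.pairwise_cons]
        constructor
        · intro y hy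
          rcases List.mem_cons.1 hy with rfl | hy'
          · exact hav
          · exact lt_trans hav (hS2 y hy')
        · rw [List.pairwise_cons]
          exact ⟨fun y hy => hS2 y hy,
            List.Pairwise.sublist (List.sublist_append_right S₁ S₂) (hSe ▸ Pval)⟩
      · intro x hx y hy
        have hxa := hS1'lt x hx
        rcases List.mem_cons.1 hy with rfl | hy'
        · exact hxa
        · rcases List.mem_cons.1 hy' with rfl | hy''
          · omega
          · have := hS2 y hy''; omega
    have hles := le_lis hS'sub hchain
    have hlen : (S₁' ++ a :: v :: S₂).length = S.length + 1 := by simp [hSe2]; omega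
    omega

lemma mono_single_is_single {l l' : List ℕ} (h : IsMonoSingleBlockMove l l') :
    IsSingleBlockMove l l' := by
  obtain ⟨A, B, C, D, h1, h2, h3, _, h5, h6⟩ := h
  exact ⟨A, B, C, D, h1, h2, h3, h5, h6⟩

lemma perm_of_move {l l' : List ℕ} (h : IsMonoSingleBlockMove l l') : l.Perm l' := by
  obtain ⟨A, B, C, D, _, _, _, _, hl, hl'⟩ := h
  subst hl hl'
  rw [List.perm_iff_count]
  intro x
  simp [List.count_append]
  omega

/-- From any non-sorted permutation, a monotone single-element move raising `lis`. -/
lemma exists_good_move {n : ℕ} {l : List ℕ} (hl : IsPermList n l) (hlt : lis l < n) :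
    ∃ l', IsMonoSingleBlockMove l l' ∧ IsPermList n l' ∧ lis l' = lis l + 1 := by
  have hnd := nodup_of_perm hl
  have hlen := length_of_perm hl
  obtain ⟨S, hS, hc, hSlen⟩ := lis_spec l
  have hv : ∃ v, v ∈ l ∧ v ∉ S := by
    by_contra h
    push_neg at h
    have := (hnd.subperm (fun x hx => h x hx)).length_le
    omega
  obtain ⟨v, hvl, hvS⟩ := hv
  have hbound : ∀ x ∈ l, x ≤ n := by
    intro x hx
    exact (mem_idL.1 (hl.subset hx)).2
  rcases not_insertable hnd hS hc hSlen hvl hvS with hcase | hcase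
  · obtain ⟨v', b, h1, h2, h3, h4, h5, h6, h7⟩ := exists_goodR hnd hS hc v hvl hvS hcase
    obtain ⟨l', hmv, hlis⟩ := moveR hnd hS hc h1 h2 h3 h4 h5 h6 h7
    refine ⟨l', hmv, (perm_of_move hmv).symm.trans hl, ?_⟩
    have hle := lis_move_le (mono_single_is_single hmv)
    omega
  · obtain ⟨v', a, h1, h2, h3, h4, h5, h6, h7⟩ :=
      exists_goodL hnd hS hc hbound n v (by omega) hvl hvS hcase
    obtain ⟨l', hmv, hlis⟩ := moveL hnd hS hc h1 h2 h3 h4 h5 h6 h7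
    refine ⟨l', hmv, (perm_of_move hmv).symm.trans hl, ?_⟩
    have hle := lis_move_le (mono_single_is_single hmv)
    omega

lemma sorts_upper {n : ℕ} : ∀ k, ∀ l : List ℕ, IsPermList n l → n = lis l + k →
    SortsIn IsMonoSingleBlockMove l (idL n) k := by
  intro k
  induction k with
  | zero =>
    intro l hl he
    have hid : l = idL n := eq_idL_of_lis_eq hl (by omega)
    exact ⟨fun _ => idL n, by rw [hid], rfl, fun i hi => absurd hi (by omega)⟩
  | succ k ih =>
    intro l hl he
    obtain ⟨l', hmv, hperm', hlis'⟩ := exists_good_move hl (by omega)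
    obtain ⟨c, hc0, hct, hstep⟩ := ih l' hperm' (by omega)
    refine ⟨fun i => if i = 0 then l else c (i - 1), by simp, by simpa using hct, ?_⟩
    intro i hi
    by_cases h0 : i = 0
    · subst h0
      simpa [hc0] using hmv
    · have h1 : i - 1 < k := by omega
      have hst := hstep (i - 1) h1
      have e : i + 1 - 1 = i - 1 + 1 := by omega
      simpa [h0, e] using hst

lemma sorts_lower {t : ℕ} {l target : List ℕ}
    (h : SortsIn IsMonoSingleBlockMove l target t) : lis target ≤ lis l + t := by
  obtain ⟨c, hc0, hct, hstep⟩ := h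
  have key : ∀ i, i ≤ t → lis (c i) ≤ lis l + i := by
    intro i
    induction i with
    | zero => intro _; simp [hc0]
    | succ i ih =>
      intro hi
      have h2 := lis_move_le (mono_single_is_single (hstep i (by omega)))
      have h3 := ih (by omega)
      omega
  have := key t le_rfl
  rw [hct] at this
  omega

end Moves


/-- The minimum number of monotone single-element block moves needed to sort
`π` to the identity equals `n - lis(π)`. -/
theorem bc1_eq_n_sub_lis (n : ℕ) (l : List ℕ) (hl : IsPermList n l) :
    IsLeast {t : ℕ | SortsIn IsMonoSingleBlockMove l (idL n) t} (n - lis l) := by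
  have hlen := length_of_perm hl
  have hle : lis l ≤ n := hlen ▸ lis_le_length l
  constructor
  · exact sorts_upper (n - lis l) l hl (by omega)
  · intro t ht
    have := sorts_lower ht
    rw [lis_idL] at this
    omega
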